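/- Every Menger K-analytic space is Hurewicz. -/

import Mathlib

open Set Function TopologicalSpace MeasureTheory

universe u

/-- A space is analytic if it is a continuous image of the Baire space `ℕ → ℕ`. -/
def IsAnalyticSpace (X : Type*) [TopologicalSpace X] : Prop :=
  ∃ f : (ℕ → ℕ) → X, Continuous f ∧ Surjective f

/-- A space is Lusin if it is an injective continuous image of the Baire space. -/
def IsLusinSpace (X : Type*) [TopologicalSpace X] : Prop :=
  ∃ f : (ℕ → ℕ) → X, Continuous f ∧ Injective f ∧ Surjective f

/-- A map is perfect if it is continuous, closed, and has compact fibers. -/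
def IsPerfectMap {X Y : Type*} [TopologicalSpace X] [TopologicalSpace Y] (f : X → Y) : Prop :=
  Continuous f ∧ IsClosedMap f ∧ ∀ y : Y, IsCompact (f ⁻¹' {y})

/-- The remainder `βX \ X` of a space in its Stone–Čech compactification. -/
def StoneCechRemainder (X : Type u) [TopologicalSpace X] : Set (StoneCech X) :=
  (Set.range (stoneCechUnit : X → StoneCech X))ᶜ

/-- A space is co-analytic if its Stone–Čech remainder is analytic. -/
def CoAnalytic (X : Type u) [TopologicalSpace X] : Prop :=
  IsAnalyticSpace ↥(StoneCechRemainder X)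

/-- A space is Čech-complete if it is a `Gδ` subset of its Stone–Čech compactification. -/
def CechComplete (X : Type u) [TopologicalSpace X] : Prop :=
  IsGδ (Set.range (stoneCechUnit : X → StoneCech X))

/-- A space is K-analytic if it is a continuous image of a Lindelöf Čech-complete
(Tychonoff) space. -/
def KAnalytic (X : Type u) [TopologicalSpace X] : Prop :=
  ∃ (Y : Type u) (_ : TopologicalSpace Y) (_ : T35Space Y),
    LindelofSpace Y ∧ CechComplete Y ∧ ∃ f : Y → X, Continuous f ∧ Surjective f

/-- A space is K-Lusin if it is an injective continuous image of a Lindelöf Čech-complete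
(Tychonoff) space. -/
def KLusin (X : Type u) [TopologicalSpace X] : Prop :=
  ∃ (Y : Type u) (_ : TopologicalSpace Y) (_ : T35Space Y),
    LindelofSpace Y ∧ CechComplete Y ∧ ∃ f : Y → X, Continuous f ∧ Injective f ∧ Surjective f

/-- The Menger property. -/
def MengerSpace (X : Type*) [TopologicalSpace X] : Prop :=
  ∀ U : ℕ → Set (Set X), (∀ n, ∀ u ∈ U n, IsOpen u) → (∀ n, ⋃₀ U n = univ) →
    ∃ V : ℕ → Set (Set X), (∀ n, V n ⊆ U n ∧ (V n).Finite) ∧ ⋃₀ (⋃ n, V n) = univ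

/-- The Rothberger property. -/
def RothbergerSpace (X : Type*) [TopologicalSpace X] : Prop :=
  ∀ U : ℕ → Set (Set X), (∀ n, ∀ u ∈ U n, IsOpen u) → (∀ n, ⋃₀ U n = univ) →
    ∃ V : ℕ → Set X, (∀ n, V n ∈ U n) ∧ (⋃ n, V n) = univ

/-- A space is productively Lindelöf if its product with every Lindelöf (Tychonoff)
space is Lindelöf. -/
def ProductivelyLindelof (X : Type u) [TopologicalSpace X] : Prop :=
  ∀ (Y : Type u) (_ : TopologicalSpace Y) (_ : T35Space Y),
    LindelofSpace Y → LindelofSpace (X × Y)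

/-- A Michael space is a Lindelöf (Tychonoff) space whose product with the Baire space
is not Lindelöf. -/
def ExistsMichaelSpace : Prop :=
  ∃ (Y : Type u) (_ : TopologicalSpace Y) (_ : T35Space Y),
    LindelofSpace Y ∧ ¬ LindelofSpace (Y × (ℕ → ℕ))

/-- The Hurewicz property: every Čech-complete space in which `X` embeds contains a
σ-compact subspace containing the image of `X`. -/
def HurewiczSpace (X : Type u) [TopologicalSpace X] : Prop :=
  ∀ (Y : Type u) (_ : TopologicalSpace Y) (_ : T35Space Y), CechComplete Y →
    ∀ f : X → Y, Topology.IsEmbedding f → ∃ S : Set Y, IsSigmaCompact S ∧ range f ⊆ S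

/-- A space is projectively σ-compact if each of its continuous images in a separable
metrizable space is σ-compact. -/
def ProjectivelySigmaCompact (X : Type u) [TopologicalSpace X] : Prop :=
  ∀ (M : Type u) (_ : TopologicalSpace M) (_ : SeparableSpace M) (_ : MetrizableSpace M)
    (f : X → M), Continuous f → IsSigmaCompact (range f)

/-- A space is projectively countable if each of its continuous images in a separable
metrizable space is countable. -/
def ProjectivelyCountable (X : Type u) [TopologicalSpace X] : Prop :=
  ∀ (M : Type u) (_ : TopologicalSpace M) (_ : SeparableSpace M) (_ : MetrizableSpace M)
    (f : X → M), Continuous f → (range f).Countable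

/-- The Alster property. -/
def AlsterSpace (X : Type*) [TopologicalSpace X] : Prop :=
  ∀ G : Set (Set X), (∀ g ∈ G, IsGδ g) → ⋃₀ G = univ →
    (∀ K : Set X, IsCompact K → ∃ F : Set (Set X), F ⊆ G ∧ F.Finite ∧ K ⊆ ⋃₀ F) →
    ∃ C : Set (Set X), C ⊆ G ∧ C.Countable ∧ ⋃₀ C = univ

/-- A compact set has countable character if it has a countable neighborhood base of
open sets. -/
def HasCountableChar {X : Type*} [TopologicalSpace X] (L : Set X) : Prop :=
  ∃ B : ℕ → Set X, (∀ n, IsOpen (B n) ∧ L ⊆ B n) ∧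
    ∀ U : Set X, IsOpen U → L ⊆ U → ∃ n, B n ⊆ U

/-- A space is of countable type if every compact set is contained in a compact set
of countable character. -/
def CountableType (X : Type*) [TopologicalSpace X] : Prop :=
  ∀ K : Set X, IsCompact K → ∃ L : Set X, IsCompact L ∧ K ⊆ L ∧ HasCountableChar L

/-- A space is nowhere locally compact if no point has a compact neighborhood. -/
def NowhereLocallyCompact (X : Type*) [TopologicalSpace X] : Prop :=
  ∀ x : X, ∀ K ∈ nhds x, ¬ IsCompact (K : Set X)

/-- Weight at most `c`: there is a basis of cardinality at most `c`. -/
def WeightLE (X : Type u) [TopologicalSpace X] (c : Cardinal.{u}) : Prop :=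
  ∃ B : Set (Set X), IsTopologicalBasis B ∧ Cardinal.mk B ≤ c

/-- A space is Frolík if it is homeomorphic to a closed subspace of a countable product
of σ-compact (Tychonoff) spaces. -/
def FrolikSpace (X : Type u) [TopologicalSpace X] : Prop :=
  ∃ (Y : ℕ → Type u) (_ : ∀ n, TopologicalSpace (Y n)) (_ : ∀ n, T35Space (Y n))
    (_ : ∀ n, SigmaCompactSpace (Y n)) (C : Set (∀ n, Y n)),
    IsClosed C ∧ Nonempty (X ≃ₜ ↥C)

/-- An s-space: some compactification has a countable open source for `X`. -/
def SSpace (X : Type u) [TopologicalSpace X] : Prop :=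
  ∃ (K : Type u) (_ : TopologicalSpace K) (_ : CompactSpace K) (_ : T2Space K)
    (e : X → K), Topology.IsEmbedding e ∧ DenseRange e ∧
      ∃ S : Set (Set K), S.Countable ∧ (∀ s ∈ S, IsOpen s) ∧
        ∃ F : Set (Set (Set K)), (∀ T ∈ F, T ⊆ S ∧ T.Nonempty) ∧
          range e = ⋃ T ∈ F, ⋂₀ T

/-- A space is Lindelöf p if it admits a perfect map onto a separable metrizable space. -/
def LindelofP (X : Type u) [TopologicalSpace X] : Prop :=
  ∃ (M : Type u) (_ : TopologicalSpace M) (_ : SeparableSpace M) (_ : MetrizableSpace M)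
    (f : X → M), IsPerfectMap f ∧ Surjective f

/-- A space is proper K-analytic if it admits a perfect map onto an analytic subspace
of `ℝ^ω`. -/
def ProperKAnalytic (X : Type u) [TopologicalSpace X] : Prop :=
  ∃ A : Set (ℕ → ℝ), IsAnalyticSpace ↥A ∧ ∃ f : X → ↥A, IsPerfectMap f ∧ Surjective f

/-- A space is proper K-Lusin if it admits a perfect map onto a Lusin subspace of `ℝ^ω`. -/
def ProperKLusin (X : Type u) [TopologicalSpace X] : Prop :=
  ∃ A : Set (ℕ → ℝ), IsLusinSpace ↥A ∧ ∃ f : X → ↥A, IsPerfectMap f ∧ Surjective f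

/-- A space is absolute Borel if, viewed as a subset of its Stone–Čech compactification,
it belongs to the σ-algebra generated by the closed sets. -/
def AbsoluteBorel (X : Type u) [TopologicalSpace X] : Prop :=
  MeasurableSet[MeasurableSpace.generateFrom {s : Set (StoneCech X) | IsClosed s}]
    (Set.range (stoneCechUnit : X → StoneCech X))

open Filter Topology Metric

section MengerBasic
variable {α : Type*} {β : Type*} [TopologicalSpace α] [TopologicalSpace β]

lemma mengerSpace_of_surjective {f : α → β} (hf : Continuous f) (hs : Surjective f)
    (hM : MengerSpace α) : MengerSpace β := by
  intro U hUo hUc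
  have hpre : ∀ u : Set β, f '' (f ⁻¹' u) = u := fun u => by
    rw [Set.image_preimage_eq_inter_range, hs.range_eq, inter_univ]
  obtain ⟨V', hV', hcov⟩ := hM (fun n => (f ⁻¹' ·) '' U n)
    (fun n u hu => by
      obtain ⟨v, hv, rfl⟩ := hu
      exact (hUo n v hv).preimage hf)
    (fun n => by
      apply eq_univ_of_forall
      intro x
      have : f x ∈ ⋃₀ U n := by rw [hUc n]; trivial
      obtain ⟨v, hv, hxv⟩ := this
      exact ⟨f ⁻¹' v, ⟨v, hv, rfl⟩, hxv⟩)
  refine ⟨fun n => {u | u ∈ U n ∧ f ⁻¹' u ∈ V' n}, fun n => ⟨fun u hu => hu.1, ?_⟩, ?_⟩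
  · have hinj : InjOn (f ⁻¹' ·) {u | u ∈ U n ∧ f ⁻¹' u ∈ V' n} := by
      intro a ha b hb h
      have h2 : f '' (f ⁻¹' a) = f '' (f ⁻¹' b) := congrArg _ h
      rwa [hpre, hpre] at h2
    exact Set.Finite.of_finite_image (((hV' n).2).subset (image_subset_iff.2 (fun u hu => hu.2)))
      hinj
  · apply eq_univ_of_forall
    intro y
    obtain ⟨x, rfl⟩ := hs y
    have : x ∈ ⋃₀ ⋃ n, V' n := by rw [hcov]; trivial
    obtain ⟨w, hw, hxw⟩ := this
    obtain ⟨n, hn⟩ := mem_iUnion.1 hw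
    obtain ⟨v, hv, hveq⟩ := (hV' n).1 hn
    have hveq' : f ⁻¹' v = w := hveq
    have hv2 : v ∈ {u | u ∈ U n ∧ f ⁻¹' u ∈ V' n} := ⟨hv, by rw [hveq']; exact hn⟩
    have hx2 : x ∈ f ⁻¹' v := by rw [hveq']; exact hxw
    exact ⟨v, mem_iUnion.2 ⟨n, hv2⟩, hx2⟩

lemma mengerSpace_closed {C : Set α} (hM : MengerSpace α) (hC : IsClosed C) :
    MengerSpace ↥C := by
  intro U hUo hUc
  classical
  obtain ⟨V', hV', hcov⟩ := hM
    (fun n => {t : Set α | IsOpen t ∧ (Subtype.val ⁻¹' t : Set ↥C) ∈ U n} ∪ {Cᶜ})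
    (fun n t ht => by
      rcases ht with ht | ht
      · exact ht.1
      · rw [mem_singleton_iff] at ht; rw [ht]; exact hC.isOpen_compl)
    (fun n => by
      apply eq_univ_of_forall
      intro x
      by_cases hx : x ∈ C
      · have : (⟨x, hx⟩ : ↥C) ∈ ⋃₀ U n := by rw [hUc n]; trivial
        obtain ⟨u, hu, hxu⟩ := this
        obtain ⟨t, hto, htu⟩ := isOpen_induced_iff.1 (hUo n u hu)
        refine ⟨t, Or.inl ⟨hto, htu.symm ▸ hu⟩, ?_⟩
        have : (⟨x, hx⟩ : ↥C) ∈ Subtype.val ⁻¹' t := by rw [htu]; exact hxu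
        exact this
      · exact ⟨Cᶜ, Or.inr rfl, hx⟩)
  refine ⟨fun n => {u | u ∈ U n ∧ ∃ t ∈ V' n, Subtype.val ⁻¹' t = u},
    fun n => ⟨fun u hu => hu.1, ?_⟩, ?_⟩
  · apply Set.Finite.subset ((hV' n).2.image (fun t => (Subtype.val ⁻¹' t : Set ↥C)))
    rintro u ⟨-, t, ht, rfl⟩
    exact mem_image_of_mem _ ht
  · apply eq_univ_of_forall
    intro c
    have : (c : α) ∈ ⋃₀ ⋃ n, V' n := by rw [hcov]; trivial
    obtain ⟨t, ht, hct⟩ := this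
    obtain ⟨n, hn⟩ := mem_iUnion.1 ht
    rcases (hV' n).1 hn with h | h
    · have hv2 : Subtype.val ⁻¹' t ∈ {u | u ∈ U n ∧ ∃ t' ∈ V' n, Subtype.val ⁻¹' t' = u} :=
        ⟨h.2, t, hn, rfl⟩
      exact ⟨Subtype.val ⁻¹' t, mem_iUnion.2 ⟨n, hv2⟩, hct⟩
    · rw [mem_singleton_iff] at h
      subst h
      exact absurd hct (by simp [c.2])

lemma baire_not_mengerSpace : ¬ MengerSpace (ℕ → ℕ) := by
  intro hM
  obtain ⟨V, hV, hcov⟩ := hM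
    (fun n => (fun k : ℕ => (fun α : ℕ → ℕ => α n) ⁻¹' Iic k) '' univ)
    (fun n u hu => by
      obtain ⟨k, -, rfl⟩ := hu
      exact (isOpen_discrete (Iic k)).preimage (continuous_apply n))
    (fun n => by
      apply eq_univ_of_forall
      intro x
      exact ⟨_, ⟨x n, trivial, rfl⟩, by simp⟩)
  have hK : ∀ n, ∃ B : ℕ, ∀ v ∈ V n, ∀ k : ℕ, v = (fun α : ℕ → ℕ => α n) ⁻¹' Iic k → k ≤ B := by
    intro n
    have hfin : {k : ℕ | (fun α : ℕ → ℕ => α n) ⁻¹' Iic k ∈ V n}.Finite := by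
      have hsurj : Surjective (fun α : ℕ → ℕ => α n) := fun m => ⟨fun _ => m, rfl⟩
      have hinj : InjOn (fun k : ℕ => (fun α : ℕ → ℕ => α n) ⁻¹' Iic k)
          {k : ℕ | (fun α : ℕ → ℕ => α n) ⁻¹' Iic k ∈ V n} := by
        intro a ha b hb h
        have h2 : (fun α : ℕ → ℕ => α n) '' ((fun α : ℕ → ℕ => α n) ⁻¹' Iic a)
            = (fun α : ℕ → ℕ => α n) '' ((fun α : ℕ → ℕ => α n) ⁻¹' Iic b) := congrArg _ h
        rw [hsurj.image_preimage, hsurj.image_preimage] at h2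
        simpa [Iic_inj] using h2
      apply Set.Finite.of_finite_image _ hinj
      apply (hV n).2.subset
      rintro u ⟨k, hk, rfl⟩
      exact hk
    obtain ⟨B, hB⟩ := hfin.bddAbove
    refine ⟨B, fun v hv k hk => hB ?_⟩
    show (fun α : ℕ → ℕ => α n) ⁻¹' Iic k ∈ V n
    rw [← hk]; exact hv
  choose B hB using hK
  have : (fun n => B n + 1) ∈ ⋃₀ ⋃ n, V n := by rw [hcov]; trivial
  obtain ⟨v, hv, hxv⟩ := this
  obtain ⟨n, hn⟩ := mem_iUnion.1 hv
  obtain ⟨k, -, hkeq⟩ := (hV n).1 hn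
  have h1 : B n + 1 ≤ k := by rw [← hkeq] at hxv; simpa using hxv
  have h2 : k ≤ B n := hB n _ hn k hkeq.symm
  omega

lemma mengerSpace_countable_subcover (hM : MengerSpace α) (𝒰 : Set (Set α))
    (ho : ∀ u ∈ 𝒰, IsOpen u) (hc : ⋃₀ 𝒰 = univ) :
    ∃ 𝒞 ⊆ 𝒰, 𝒞.Countable ∧ ⋃₀ 𝒞 = univ := by
  obtain ⟨V, hV, hcov⟩ := hM (fun _ => 𝒰) (fun _ => ho) (fun _ => hc)
  exact ⟨⋃ n, V n, iUnion_subset (fun n => (hV n).1),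
    countable_iUnion (fun n => (hV n).2.countable), hcov⟩

end MengerBasic

section Dichotomy
variable {Q : Type*} [MetricSpace Q]

def SmallSet (s : Set Q) : Prop := ∃ T : Set Q, IsSigmaCompact T ∧ s ⊆ T

lemma smallSet_mono {s t : Set Q} (h : s ⊆ t) (ht : SmallSet t) : SmallSet s :=
  let ⟨T, hT, hsub⟩ := ht; ⟨T, hT, h.trans hsub⟩

lemma smallSet_empty : SmallSet (∅ : Set Q) := ⟨∅, isSigmaCompact_empty, subset_rfl⟩

lemma smallSet_of_isCompact {s K : Set Q} (hK : IsCompact K) (h : s ⊆ K) : SmallSet s :=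
  ⟨K, hK.isSigmaCompact, h⟩

lemma smallSet_iUnion {ι : Type*} [Countable ι] (s : ι → Set Q) (h : ∀ i, SmallSet (s i)) :
    SmallSet (⋃ i, s i) := by
  choose T hT hsub using h
  exact ⟨⋃ i, T i, isSigmaCompact_iUnion _ hT, iUnion_mono hsub⟩

lemma smallSet_biUnion {ι : Type*} {I : Set ι} (hI : I.Countable) (s : ι → Set Q)
    (h : ∀ i ∈ I, SmallSet (s i)) : SmallSet (⋃ i ∈ I, s i) := by
  haveI := hI.to_subtype
  rw [biUnion_eq_iUnion]
  exact smallSet_iUnion _ (fun i => h i i.2)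

lemma nonempty_of_not_smallSet {s : Set Q} (h : ¬ SmallSet s) : s.Nonempty := by
  rcases s.eq_empty_or_nonempty with rfl | hne
  · exact absurd smallSet_empty h
  · exact hne

lemma exists_pos_le_of_finite {γ : Type*} {F : Set γ} (hF : F.Finite) (f : γ → ℝ)
    (hf : ∀ x ∈ F, 0 < f x) : ∃ δ > 0, ∀ x ∈ F, δ ≤ f x := by
  rcases F.eq_empty_or_nonempty with rfl | hne
  · exact ⟨1, one_pos, fun x hx => absurd hx (notMem_empty x)⟩
  · obtain ⟨x0, hx0, hmin⟩ := Set.Finite.exists_minimalFor f F hF hne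
    refine ⟨f x0, hf x0 hx0, fun x hx => ?_⟩
    rcases le_total (f x0) (f x) with h | h
    · exact h
    · exact hmin hx h

variable [CompleteSpace Q] [SecondCountableTopology Q]

lemma dich_step (As : List ℕ → Set Q) (hdec : ∀ s, As s = ⋃ k, As (s ++ [k]))
    (s : List ℕ) (c : Q) (ρ : ℝ) (hρ : 0 < ρ)
    (hbig : ¬ SmallSet (As s ∩ Metric.ball c (ρ/2))) :
    ∃ (nd' : ℕ → List ℕ) (c' : ℕ → Q) (r : ℝ) (ε : ℝ),
      0 < r ∧ 0 < ε ∧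
      (∀ k, ∃ a, nd' k = s ++ [a]) ∧
      (∀ k, ¬ SmallSet (As (nd' k) ∩ Metric.ball (c' k) (r/2))) ∧
      (∀ k, Metric.closedBall (c' k) r ⊆ Metric.ball c ρ) ∧
      r ≤ ρ/4 ∧ r ≤ ε/8 ∧
      (∀ k k', k ≠ k' → ε ≤ dist (c' k) (c' k')) := by
  classical
  set R : Set Q := As s ∩ Metric.ball c (ρ/2) with hR
  set BP : Set Q := {y : Q | ∀ δ > 0, ¬ SmallSet (R ∩ Metric.ball y δ)} with hBP
  -- points outside any open set containing BP form a small set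
  have hout : ∀ U : Set Q, BP ⊆ U → SmallSet (R \ U) := by
    intro U hU
    set bas := TopologicalSpace.countableBasis Q with hbas
    have hbasis : TopologicalSpace.IsTopologicalBasis bas :=
      TopologicalSpace.isBasis_countableBasis Q
    have hbcnt : bas.Countable := TopologicalSpace.countable_countableBasis Q
    have hsub : R \ U ⊆ ⋃ b ∈ {b ∈ bas | SmallSet (R ∩ b)}, (R ∩ b) := by
      intro y hy
      have hyBP : y ∉ BP := fun h => (hy.2) (hU h)
      simp only [hBP, mem_setOf_eq, not_forall] at hyBP
      obtain ⟨δ, hδ, hsm⟩ := hyBP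
      rw [not_not] at hsm
      obtain ⟨b, hb, hyb, hbsub⟩ := hbasis.exists_subset_of_mem_open
        (Metric.mem_ball_self hδ) Metric.isOpen_ball
      have hbmem : b ∈ {b ∈ bas | SmallSet (R ∩ b)} :=
        ⟨hb, smallSet_mono (inter_subset_inter_right R hbsub) hsm⟩
      exact mem_biUnion hbmem ⟨hy.1, hyb⟩
    refine smallSet_mono hsub (smallSet_biUnion (hbcnt.mono (sep_subset _ _)) _ ?_)
    exact fun b hb => hb.2
  have hBPballne : ∀ y ∈ BP, ∀ δ > 0, (R ∩ Metric.ball y δ).Nonempty := by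
    intro y hy δ hδ
    exact nonempty_of_not_smallSet (hy δ hδ)
  have hBPdist : ∀ y ∈ BP, dist y c ≤ ρ/2 := by
    intro y hy
    refine le_of_forall_pos_le_add (fun δ hδ => ?_)
    obtain ⟨z, hz⟩ := hBPballne y hy δ hδ
    have h1 : dist z c < ρ/2 := hz.1.2
    have h2 : dist z y < δ := hz.2
    calc dist y c ≤ dist y z + dist z c := dist_triangle _ _ _
      _ ≤ δ + (ρ/2) := by rw [dist_comm y z]; exact add_le_add h2.le h1.le
      _ = ρ/2 + δ := by ring
  have hBPclosed : IsClosed BP := by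
    rw [← isOpen_compl_iff, Metric.isOpen_iff]
    intro y hy
    simp only [hBP, mem_compl_iff, mem_setOf_eq, not_forall] at hy
    obtain ⟨δ, hδ, hsm⟩ := hy
    rw [not_not] at hsm
    refine ⟨δ/2, half_pos hδ, fun y' hy' => ?_⟩
    simp only [hBP, mem_compl_iff, mem_setOf_eq, not_forall]
    refine ⟨δ/2, half_pos hδ, not_not.2 (smallSet_mono (inter_subset_inter_right R ?_) hsm)⟩
    intro z hz
    calc dist z y ≤ dist z y' + dist y' y := dist_triangle _ _ _
      _ < δ/2 + δ/2 := add_lt_add hz (Metric.mem_ball.1 hy')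
      _ = δ := add_halves δ
  have hBPne : BP.Nonempty := by
    by_contra h
    rw [not_nonempty_iff_eq_empty] at h
    have := hout ∅ (by rw [h])
    rw [diff_empty] at this
    exact hbig this
  have hBPncpt : ¬ IsCompact BP := by
    intro hK
    have hcover : R ⊆ (⋃ m : ℕ, (R \ {y | Metric.infDist y BP < 1/((m:ℝ)+1)})) ∪ BP := by
      intro y hy
      by_cases hyBP : y ∈ BP
      · exact Or.inr hyBP
      · left
        by_contra hnot
        simp only [mem_iUnion, not_exists, mem_diff, not_and, not_not] at hnot
        have hzero : Metric.infDist y BP = 0 := by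
          have hnn := Metric.infDist_nonneg (s := BP) (x := y)
          refine le_antisymm ?_ hnn
          refine le_of_forall_pos_le_add (fun δ hδ => ?_)
          obtain ⟨m, hm⟩ := exists_nat_one_div_lt hδ
          have := hnot m hy
          simp only [mem_setOf_eq] at this
          have h4 : Metric.infDist y BP < 1/((m:ℝ)+1) := this
          have h5 : 1/((m:ℝ)+1) < δ := by exact_mod_cast hm
          linarith
        have : y ∈ closure BP := (Metric.mem_closure_iff_infDist_zero hBPne).2 hzero
        rw [hBPclosed.closure_eq] at this
        exact hyBP this
    have hsmalls : ∀ m : ℕ, SmallSet (R \ {y | Metric.infDist y BP < 1/((m:ℝ)+1)}) := by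
      intro m
      apply hout
      intro y hy
      simp only [mem_setOf_eq]
      rw [Metric.infDist_zero_of_mem hy]
      positivity
    have : SmallSet R := by
      refine smallSet_mono hcover ?_
      have h1 : SmallSet (⋃ m : ℕ, (R \ {y | Metric.infDist y BP < 1/((m:ℝ)+1)})) :=
        smallSet_iUnion _ hsmalls
      obtain ⟨T1, hT1, hs1⟩ := h1
      have hTu : IsSigmaCompact (T1 ∪ BP) := by
        rw [union_eq_iUnion]
        exact isSigmaCompact_iUnion _ (fun bb => by
          cases bb
          · simpa using hK.isSigmaCompact
          · simpa using hT1)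
      exact ⟨T1 ∪ BP, hTu, union_subset_union hs1 subset_rfl⟩
    exact hbig this
  have htb : ¬ TotallyBounded BP := fun h =>
    hBPncpt (isCompact_iff_totallyBounded_isComplete.2 ⟨h, hBPclosed.isComplete⟩)
  rw [Metric.totallyBounded_iff] at htb
  push_neg at htb
  obtain ⟨ε, hε, hsep⟩ := htb
  -- build an ε-separated sequence in BP
  have hpick : ∀ l : List Q, ∃ z, z ∈ BP ∧ ∀ w ∈ l, ε ≤ dist z w := by
    intro l
    have hnsub := hsep {w | w ∈ l} l.finite_toSet
    rw [not_subset] at hnsub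
    obtain ⟨z, hzBP, hz⟩ := hnsub
    refine ⟨z, hzBP, fun w hw => ?_⟩
    by_contra hlt
    push_neg at hlt
    exact hz (mem_biUnion hw (Metric.mem_ball.2 hlt))
  let Lf : ℕ → List Q := fun n => Nat.rec [] (fun _ l => (hpick l).choose :: l) n
  have hLf : ∀ n, Lf (n+1) = (hpick (Lf n)).choose :: Lf n := fun n => rfl
  set y : ℕ → Q := fun n => (hpick (Lf n)).choose with hy
  have hyBP : ∀ n, y n ∈ BP := fun n => (hpick (Lf n)).choose_spec.1
  have hymem : ∀ m n, m < n → y m ∈ Lf n := by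
    intro m n h
    induction n with
    | zero => omega
    | succ n ih =>
      rw [hLf]
      rcases Nat.lt_succ_iff_lt_or_eq.1 h with h' | h'
      · exact List.mem_cons_of_mem _ (ih h')
      · subst h'; exact List.mem_cons_self
  have hysep : ∀ m n, m ≠ n → ε ≤ dist (y m) (y n) := by
    have key : ∀ m n, m < n → ε ≤ dist (y n) (y m) :=
      fun m n h => (hpick (Lf n)).choose_spec.2 _ (hymem m n h)
    intro m n h
    rcases lt_or_gt_of_ne h with h' | h'
    · rw [dist_comm]; exact key m n h'
    · exact key n m h'
  set r : ℝ := min (ρ/8) (ε/8) with hr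
  have hrpos : 0 < r := lt_min (by positivity) (by positivity)
  have hbigk : ∀ k : ℕ, ∃ b : ℕ, ¬ SmallSet (As (s ++ [b]) ∩ Metric.ball (y k) (r/2)) := by
    intro k
    have h1 : ¬ SmallSet (As s ∩ Metric.ball (y k) (r/2)) := by
      have hk := hyBP k (r/2) (half_pos hrpos)
      intro hsm
      exact hk (smallSet_mono (show R ∩ Metric.ball (y k) (r/2) ⊆ As s ∩ Metric.ball (y k) (r/2)
        from fun z hz => mem_inter hz.1.1 hz.2) hsm)
    by_contra hall
    push_neg at hall
    apply h1
    have heq : As s ∩ Metric.ball (y k) (r/2)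
        = ⋃ b, (As (s ++ [b]) ∩ Metric.ball (y k) (r/2)) := by
      rw [hdec s, iUnion_inter]
    rw [heq]
    exact smallSet_iUnion _ hall
  choose b hb using hbigk
  refine ⟨fun k => s ++ [b k], y, r, ε, hrpos, hε, fun k => ⟨b k, rfl⟩, hb, ?_, ?_,
    min_le_right _ _, fun k k' h => hysep k k' h⟩
  · intro k z hz
    have h1 : dist z (y k) ≤ r := Metric.mem_closedBall.1 hz
    have h2 : dist (y k) c ≤ ρ/2 := hBPdist _ (hyBP k)
    have h3 : dist z c ≤ r + ρ/2 := le_trans (dist_triangle z (y k) c) (add_le_add h1 h2)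
    have hr8 : r ≤ ρ/8 := min_le_left _ _
    exact Metric.mem_ball.2 (by linarith)
  · have hr8 : r ≤ ρ/8 := min_le_left _ _
    linarith

private def Adr (β : ℕ → ℕ) : ℕ → List ℕ
  | 0 => []
  | n+1 => β n :: Adr β n

private lemma Adr_length (β : ℕ → ℕ) : ∀ n, (Adr β n).length = n
  | 0 => rfl
  | n+1 => by simp [Adr, Adr_length β n]

private lemma Adr_agree {β β' : ℕ → ℕ} : ∀ {m}, Adr β m = Adr β' m → ∀ j < m, β j = β' j
  | 0, _, j, hj => absurd hj (Nat.not_lt_zero j)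
  | m+1, h, j, hj => by
    rw [Adr, Adr] at h
    injection h with h1 h2
    rcases Nat.lt_succ_iff_lt_or_eq.1 hj with h' | h'
    · exact Adr_agree h2 j h'
    · subst h'; exact h1

private lemma Adr_append (β : ℕ → ℕ) {n m : ℕ} (h : n ≤ m) : ∃ l, Adr β m = l ++ Adr β n := by
  induction m with
  | zero =>
    have : n = 0 := Nat.le_zero.1 h
    subst this; exact ⟨[], rfl⟩
  | succ m ih =>
    rcases eq_or_lt_of_le h with rfl | h'
    · exact ⟨[], rfl⟩
    · obtain ⟨l, hl⟩ := ih (Nat.lt_succ_iff.1 h')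
      exact ⟨β m :: l, by rw [Adr, hl]; rfl⟩

theorem dichotomy {Q : Type*} [MetricSpace Q] [CompleteSpace Q] [SecondCountableTopology Q]
    (As : List ℕ → Set Q)
    (hdec : ∀ s, As s = ⋃ k, As (s ++ [k]))
    (hP : ∀ (α : ℕ → ℕ) (x : ℕ → Q) (yy : Q),
        (∀ n, x n ∈ As ((List.range n).map α)) →
        Filter.Tendsto x Filter.atTop (nhds yy) → yy ∈ As [])
    (hM : MengerSpace ↥(As [])) :
    ∃ S : Set Q, IsSigmaCompact S ∧ As [] ⊆ S := by
  classical
  by_contra hS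
  have hnotsmall : ¬ SmallSet (As []) := by
    rintro ⟨T, hT, hsub⟩; exact hS ⟨T, hT, hsub⟩
  -- root ball
  obtain ⟨cD, hcDc, hcDd⟩ := TopologicalSpace.exists_countable_dense Q
  have hroot : ∃ c₀ : Q, ¬ SmallSet (As [] ∩ Metric.ball c₀ (1/2)) := by
    by_contra hall
    push_neg at hall
    apply hnotsmall
    have hcov : As [] ⊆ ⋃ q ∈ cD, (As [] ∩ Metric.ball q (1/2)) := by
      intro z hz
      obtain ⟨q, hq1, hq2⟩ := (Metric.dense_iff.1 hcDd z (1/2) (by norm_num))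
      exact mem_biUnion hq2 ⟨hz, by rw [Metric.mem_ball, dist_comm]; exact hq1⟩
    exact smallSet_mono hcov (smallSet_biUnion hcDc _ (fun q _ => hall q))
  obtain ⟨c₀, hc₀⟩ := hroot
  set Inv : List ℕ × Q × ℝ → Prop :=
    fun p => 0 < p.2.2 ∧ ¬ SmallSet (As p.1 ∩ Metric.ball p.2.1 (p.2.2/2)) with hInvdef
  have stepEx : ∀ p, Inv p →
      ∃ chε : (ℕ → List ℕ × Q × ℝ) × ℝ,
        0 < chε.2 ∧
        (∀ k, Inv (chε.1 k)) ∧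
        (∀ k, ∃ aa, (chε.1 k).1 = p.1 ++ [aa]) ∧
        (∀ k, Metric.closedBall (chε.1 k).2.1 (chε.1 k).2.2 ⊆ Metric.ball p.2.1 p.2.2) ∧
        (∀ k, (chε.1 k).2.2 ≤ p.2.2/4) ∧
        (∀ k, (chε.1 k).2.2 ≤ chε.2/8) ∧
        (∀ k k', k ≠ k' → chε.2 ≤ dist (chε.1 k).2.1 (chε.1 k').2.1) := by
    rintro ⟨s, c, ρ⟩ ⟨h1, h2⟩
    obtain ⟨nd', c', r, ε, hr, hε, hnode, hbig, hcb, hr4, hr8, hsepp⟩ :=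
      dich_step As hdec s c ρ h1 h2
    exact ⟨(fun k => (nd' k, c' k, r), ε), hε, fun k => ⟨hr, hbig k⟩, hnode, hcb,
      fun _ => hr4, fun _ => hr8, hsepp⟩
  obtain ⟨sch, hsch_nil, hsch_cons⟩ :
      ∃ sch : List ℕ → List ℕ × Q × ℝ, sch [] = ([], c₀, 1) ∧
        ∀ k σ, sch (k :: σ) =
          if h : Inv (sch σ) then (stepEx (sch σ) h).choose.1 k else sch σ :=
    ⟨fun σ => σ.rec ([], c₀, 1)
      (fun k _σ ih => if h : Inv ih then (stepEx ih h).choose.1 k else ih),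
      rfl, fun _ _ => rfl⟩
  have hInv : ∀ σ, Inv (sch σ) := by
    intro σ
    induction σ with
    | nil =>
      rw [hsch_nil]
      exact ⟨one_pos, hc₀⟩
    | cons k σ ih =>
      rw [hsch_cons, dif_pos ih]
      exact ((stepEx (sch σ) ih).choose_spec.2.1) k
  have hcons : ∀ k σ, sch (k :: σ) = (stepEx (sch σ) (hInv σ)).choose.1 k := by
    intro k σ
    rw [hsch_cons, dif_pos (hInv σ)]
  obtain ⟨eps, heps⟩ : ∃ eps : List ℕ → ℝ, ∀ σ, eps σ = (stepEx (sch σ) (hInv σ)).choose.2 :=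
    ⟨_, fun _ => rfl⟩
  have h_pos : ∀ σ, 0 < (sch σ).2.2 := fun σ => (hInv σ).1
  have h_big : ∀ σ, ¬ SmallSet (As (sch σ).1 ∩ Metric.ball (sch σ).2.1 ((sch σ).2.2/2)) :=
    fun σ => (hInv σ).2
  have h_epos : ∀ σ, 0 < eps σ := fun σ => by
    rw [heps]; exact (stepEx (sch σ) (hInv σ)).choose_spec.1
  have h_node : ∀ k σ, ∃ aa, (sch (k :: σ)).1 = (sch σ).1 ++ [aa] := fun k σ => by
    rw [hcons k σ]; exact (stepEx (sch σ) (hInv σ)).choose_spec.2.2.1 k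
  have h_cb : ∀ k σ, Metric.closedBall (sch (k :: σ)).2.1 (sch (k :: σ)).2.2 ⊆
      Metric.ball (sch σ).2.1 (sch σ).2.2 := fun k σ => by
    rw [hcons k σ]; exact (stepEx (sch σ) (hInv σ)).choose_spec.2.2.2.1 k
  have h_r4 : ∀ k σ, (sch (k :: σ)).2.2 ≤ (sch σ).2.2/4 := fun k σ => by
    rw [hcons k σ]; exact (stepEx (sch σ) (hInv σ)).choose_spec.2.2.2.2.1 k
  have h_r8 : ∀ k σ, (sch (k :: σ)).2.2 ≤ eps σ/8 := fun k σ => by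
    rw [hcons k σ, heps]; exact (stepEx (sch σ) (hInv σ)).choose_spec.2.2.2.2.2.1 k
  have h_sep : ∀ σ k k', k ≠ k' →
      eps σ ≤ dist (sch (k :: σ)).2.1 (sch (k' :: σ)).2.1 := fun σ k k' h => by
    rw [hcons k σ, hcons k' σ, heps]
    exact (stepEx (sch σ) (hInv σ)).choose_spec.2.2.2.2.2.2 k k' h
  obtain ⟨Cb, hCbdef⟩ : ∃ Cb : List ℕ → Set Q,
      ∀ σ, Cb σ = Metric.closedBall (sch σ).2.1 (sch σ).2.2 := ⟨_, fun _ => rfl⟩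
  have h_cb' : ∀ k σ, Cb (k :: σ) ⊆ Cb σ := fun k σ => by
    rw [hCbdef, hCbdef]
    exact (h_cb k σ).trans Metric.ball_subset_closedBall
  have h_cbb : ∀ k σ, Cb (k :: σ) ⊆ Metric.ball (sch σ).2.1 (sch σ).2.2 := fun k σ => by
    rw [hCbdef]; exact h_cb k σ
  have h_desc : ∀ l σ, Cb (l ++ σ) ⊆ Cb σ := by
    intro l
    induction l with
    | nil => exact fun σ => subset_rfl
    | cons k l ih => exact fun σ => (h_cb' k (l ++ σ)).trans (ih σ)
  have h_rdle : ∀ σ : List ℕ, (sch σ).2.2 ≤ (1/2:ℝ)^σ.length := by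
    intro σ
    induction σ with
    | nil => rw [hsch_nil]; norm_num
    | cons k σ ih =>
      have h1 := h_r4 k σ
      have h2 := h_pos σ
      have h4 : ((1/2:ℝ)^(k::σ).length) = ((1/2:ℝ)^σ.length)/2 := by
        rw [List.length_cons, pow_succ]
        ring
      rw [h4]
      linarith
  have h_len : ∀ σ : List ℕ, ((sch σ).1).length = σ.length := by
    intro σ
    induction σ with
    | nil => simp [hsch_nil]
    | cons k σ ih =>
      obtain ⟨aa, haa⟩ := h_node k σ
      simp [haa, ih]
  have h_disj : ∀ σ σ' : List ℕ, σ.length = σ'.length → σ ≠ σ' →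
      Disjoint (Cb σ) (Cb σ') := by
    intro σ
    induction σ with
    | nil =>
      intro σ' hlen hne
      cases σ' with
      | nil => exact absurd rfl hne
      | cons k τ => simp at hlen
    | cons k τ ih =>
      intro σ' hlen hne
      cases σ' with
      | nil => simp at hlen
      | cons k' τ' =>
        by_cases hτ : τ = τ'
        · subst hτ
          have hk : k ≠ k' := fun h => hne (by rw [h])
          rw [Set.disjoint_left]
          intro z hz hz'
          rw [hCbdef] at hz hz'
          have hd := h_sep τ k k' hk
          have h1 : dist z (sch (k :: τ)).2.1 ≤ (sch (k :: τ)).2.2 := hz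
          have h2 : dist z (sch (k' :: τ)).2.1 ≤ (sch (k' :: τ)).2.2 := hz'
          have h3 := h_r8 k τ
          have h4 := h_r8 k' τ
          have h5 := h_epos τ
          have htri : dist (sch (k :: τ)).2.1 (sch (k' :: τ)).2.1 ≤
              dist (sch (k :: τ)).2.1 z + dist z (sch (k' :: τ)).2.1 := dist_triangle _ _ _
          rw [dist_comm _ z] at htri
          linarith
        · have hlen' : τ.length = τ'.length := by simpa using hlen
          exact Set.disjoint_of_subset (h_cb' k τ) (h_cb' k' τ') (ih τ' hlen' hτ)
  -- local finiteness of levels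
  have h_localfin : ∀ (n : ℕ) (z : Q), ∃ t > 0,
      {σ : List ℕ | σ.length = n ∧ (Cb σ ∩ Metric.ball z t).Nonempty}.Finite := by
    intro n
    induction n with
    | zero =>
      intro z
      refine ⟨1, one_pos, Set.Finite.subset (Set.finite_singleton ([] : List ℕ)) ?_⟩
      rintro σ ⟨hlen, -⟩
      exact List.length_eq_zero_iff.1 hlen
    | succ n ih =>
      intro z
      obtain ⟨t, ht, hfin⟩ := ih z
      obtain ⟨δ, hδ, hδle⟩ := exists_pos_le_of_finite hfin (fun σ => eps σ/4)
        (fun σ _ => by have := h_epos σ; linarith)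
      refine ⟨min t δ, lt_min ht hδ, ?_⟩
      have htail : ∀ τ ∈ {σ : List ℕ | σ.length = n+1 ∧ (Cb σ ∩ Metric.ball z (min t δ)).Nonempty},
          τ.tail ∈ {σ : List ℕ | σ.length = n ∧ (Cb σ ∩ Metric.ball z t).Nonempty} := by
        rintro τ ⟨hlen, w, hw1, hw2⟩
        cases τ with
        | nil => simp at hlen
        | cons k σ =>
          refine ⟨by simpa using hlen, w, h_cb' k σ hw1, ?_⟩
          exact Metric.ball_subset_ball (min_le_left _ _) hw2
      have hinj : Set.InjOn List.tail
          {σ : List ℕ | σ.length = n+1 ∧ (Cb σ ∩ Metric.ball z (min t δ)).Nonempty} := by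
        rintro τ₁ hτ₁ τ₂ hτ₂ htt
        obtain ⟨hlen₁, w₁, hw₁, hwb₁⟩ := hτ₁
        obtain ⟨hlen₂, w₂, hw₂, hwb₂⟩ := hτ₂
        cases τ₁ with
        | nil => simp at hlen₁
        | cons k₁ σ₁ =>
          cases τ₂ with
          | nil => simp at hlen₂
          | cons k₂ σ₂ =>
            simp only [List.tail_cons] at htt
            subst htt
            by_contra hne
            have hk : k₁ ≠ k₂ := fun h => hne (by rw [h])
            have hσF : σ₁ ∈ {σ : List ℕ | σ.length = n ∧ (Cb σ ∩ Metric.ball z t).Nonempty} :=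
              htail _ ⟨hlen₁, w₁, hw₁, hwb₁⟩
            have hδ4 : min t δ ≤ eps σ₁/4 := le_trans (min_le_right _ _) (hδle σ₁ hσF)
            have hsepk := h_sep σ₁ k₁ k₂ hk
            rw [hCbdef] at hw₁ hw₂
            have e1 : dist w₁ (sch (k₁ :: σ₁)).2.1 ≤ (sch (k₁ :: σ₁)).2.2 := hw₁
            have e2 : dist w₂ (sch (k₂ :: σ₁)).2.1 ≤ (sch (k₂ :: σ₁)).2.2 := hw₂
            have e3 : dist w₁ z < min t δ := hwb₁
            have e4 : dist w₂ z < min t δ := hwb₂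
            have e5 := h_r8 k₁ σ₁
            have e6 := h_r8 k₂ σ₁
            have e7 := h_epos σ₁
            have ta : dist (sch (k₁ :: σ₁)).2.1 (sch (k₂ :: σ₁)).2.1 ≤
                dist (sch (k₁ :: σ₁)).2.1 z + dist z (sch (k₂ :: σ₁)).2.1 := dist_triangle _ _ _
            have tb : dist (sch (k₁ :: σ₁)).2.1 z ≤
                dist (sch (k₁ :: σ₁)).2.1 w₁ + dist w₁ z := dist_triangle _ _ _
            have tc : dist z (sch (k₂ :: σ₁)).2.1 ≤
                dist z w₂ + dist w₂ (sch (k₂ :: σ₁)).2.1 := dist_triangle _ _ _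
            have e1' : dist (sch (k₁ :: σ₁)).2.1 w₁ ≤ (sch (k₁ :: σ₁)).2.2 := by
              rw [dist_comm]; exact e1
            have e4' : dist z w₂ < min t δ := by rw [dist_comm]; exact e4
            linarith
      exact Set.Finite.of_finite_image (Set.Finite.subset hfin (by
        rintro l ⟨τ, hτ, rfl⟩
        exact htail τ hτ)) hinj
  -- levels are closed
  have h_Lv_closed : ∀ n : ℕ, IsClosed (⋃ σ ∈ {σ : List ℕ | σ.length = n}, Cb σ) := by
    intro n
    rw [← isOpen_compl_iff, isOpen_iff_mem_nhds]
    intro z hz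
    obtain ⟨t, ht, hfin⟩ := h_localfin n z
    have hCcl : IsClosed (⋃ σ ∈ {σ : List ℕ | σ.length = n ∧ (Cb σ ∩ Metric.ball z t).Nonempty}, Cb σ) := by
      apply Set.Finite.isClosed_biUnion hfin
      intro σ _
      rw [hCbdef]
      exact Metric.isClosed_closedBall
    have hznot : z ∉ ⋃ σ ∈ {σ : List ℕ | σ.length = n ∧ (Cb σ ∩ Metric.ball z t).Nonempty}, Cb σ := by
      intro hmem
      obtain ⟨σ, hσ, hzσ⟩ := mem_iUnion₂.1 hmem
      exact hz (mem_iUnion₂.2 ⟨σ, hσ.1, hzσ⟩)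
    refine Filter.mem_of_superset
      ((Metric.isOpen_ball.inter hCcl.isOpen_compl).mem_nhds
        ⟨Metric.mem_ball_self ht, hznot⟩) ?_
    rintro w ⟨hwb, hwc⟩
    intro hwLv
    obtain ⟨σ, hσlen, hwσ⟩ := mem_iUnion₂.1 hwLv
    exact hwc (mem_iUnion₂.2 ⟨σ, ⟨hσlen, w, hwσ, hwb⟩, hwσ⟩)
  set Dset : Set Q := ⋂ n : ℕ, (⋃ σ ∈ {σ : List ℕ | σ.length = n}, Cb σ) with hDsetdef
  have hDclosed : IsClosed Dset := isClosed_iInter h_Lv_closed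
  have h_wit : ∀ y ∈ Dset, ∀ n : ℕ, ∃ σ : List ℕ, σ.length = n ∧ y ∈ Cb σ := by
    intro y hy n
    have := mem_iInter.1 hy n
    obtain ⟨σ, hσ, hyσ⟩ := mem_iUnion₂.1 this
    exact ⟨σ, hσ, hyσ⟩
  have h_uniq : ∀ (y : Q) (σ σ' : List ℕ), σ.length = σ'.length →
      y ∈ Cb σ → y ∈ Cb σ' → σ = σ' := by
    intro y σ σ' hlen h1 h2
    by_contra hne
    exact Set.disjoint_left.1 (h_disj σ σ' hlen hne) h1 h2
  obtain ⟨bF, hbF⟩ : ∃ bF : Q → ℕ → ℕ,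
      ∀ y n (h : ∃ σ : List ℕ, σ.length = n+1 ∧ y ∈ Cb σ), bF y n = h.choose.headI :=
    ⟨fun y n => if h : ∃ σ : List ℕ, σ.length = n+1 ∧ y ∈ Cb σ then h.choose.headI else 0,
      fun y n h => dif_pos h⟩
  have h_addr : ∀ y ∈ Dset, ∀ n, y ∈ Cb (Adr (bF y) n) := by
    intro y hy n
    induction n with
    | zero =>
      obtain ⟨σ, hσlen, hyσ⟩ := h_wit y hy 0
      have hσnil : σ = [] := List.length_eq_zero_iff.1 hσlen
      subst hσnil
      exact hyσ
    | succ n ihn =>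
      have hex : ∃ σ : List ℕ, σ.length = n+1 ∧ y ∈ Cb σ := h_wit y hy (n+1)
      have hbFy := hbF y n hex
      have hprop := hex.choose_spec
      rcases hσ0 : hex.choose with _ | ⟨a, τ⟩
      · rw [hσ0] at hprop; simp at hprop
      · rw [hσ0] at hprop hbFy
        have hτlen : τ.length = n := by simpa using hprop.1
        have hyτ : y ∈ Cb τ := h_cb' a τ hprop.2
        have hτeq : τ = Adr (bF y) n :=
          h_uniq y τ (Adr (bF y) n) (by rw [hτlen, Adr_length]) hyτ ihn
        show y ∈ Cb (bF y n :: Adr (bF y) n)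
        rw [hbFy]
        simp only [List.headI]
        rw [← hτeq]
        exact hprop.2
  -- convergence helper
  have hhalf : Filter.Tendsto (fun n : ℕ => (2:ℝ) * (1/2)^n) Filter.atTop (nhds 0) := by
    have h0 := tendsto_pow_atTop_nhds_zero_of_lt_one
      (by norm_num : (0:ℝ) ≤ 1/2) (by norm_num : (1/2:ℝ) < 1)
    simpa using h0.const_mul (2:ℝ)
  have hxpick : ∀ σ : List ℕ, ∃ x, x ∈ As (sch σ).1 ∧
      x ∈ Metric.ball (sch σ).2.1 ((sch σ).2.2/2) := by
    intro σ
    obtain ⟨x, hx⟩ := nonempty_of_not_smallSet (h_big σ)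
    exact ⟨x, hx.1, hx.2⟩
  have hxCb : ∀ σ, (hxpick σ).choose ∈ Cb σ := by
    intro σ
    rw [hCbdef]
    have h := Metric.mem_ball.1 (hxpick σ).choose_spec.2
    have := h_pos σ
    exact Metric.mem_closedBall.2 (by linarith)
  have hdistCb : ∀ (σ : List ℕ) (w w' : Q), w ∈ Cb σ → w' ∈ Cb σ →
      dist w w' ≤ 2 * (1/2)^σ.length := by
    intro σ w w' hw hw'
    rw [hCbdef] at hw hw'
    have h1 : dist w (sch σ).2.1 ≤ (sch σ).2.2 := hw
    have h2 : dist w' (sch σ).2.1 ≤ (sch σ).2.2 := hw'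
    have h3 := h_rdle σ
    have h4 := dist_triangle w (sch σ).2.1 w'
    rw [dist_comm (sch σ).2.1 w'] at h4
    linarith
  -- Dset ⊆ As []
  have hDsubA : Dset ⊆ As [] := by
    intro y hy
    have hnodechain : ∀ n, ∃ aa, (sch (Adr (bF y) (n+1))).1 = (sch (Adr (bF y) n)).1 ++ [aa] :=
      fun n => h_node (bF y n) (Adr (bF y) n)
    choose αN hαN using hnodechain
    have h_nd_eq : ∀ n, (sch (Adr (bF y) n)).1 = (List.range n).map αN := by
      intro n
      induction n with
      | zero => simp [Adr, hsch_nil]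
      | succ n ih => rw [hαN n, ih, List.range_succ, List.map_append]; simp
    set x : ℕ → Q := fun n => (hxpick (Adr (bF y) n)).choose with hxdef
    have hx1 : ∀ n, x n ∈ As ((List.range n).map αN) := fun n => by
      rw [← h_nd_eq n]; exact (hxpick _).choose_spec.1
    have hdist : ∀ n, dist (x n) y ≤ 2 * (1/2)^n := by
      intro n
      have hxn : x n ∈ Cb (Adr (bF y) n) := hxCb _
      have := hdistCb (Adr (bF y) n) (x n) y hxn (h_addr y hy n)
      rwa [Adr_length] at this
    have hlim : Filter.Tendsto x Filter.atTop (nhds y) := by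
      rw [tendsto_iff_dist_tendsto_zero]
      exact squeeze_zero (fun n => dist_nonneg) hdist hhalf
    exact hP αN x y hx1 hlim
  -- surjectivity of the branch map
  have hsurjD : ∀ β : ℕ → ℕ, ∃ y ∈ Dset, bF y = β := by
    intro β
    set x : ℕ → Q := fun n => (hxpick (Adr β n)).choose with hxdef
    have hxCb' : ∀ n m, n ≤ m → x m ∈ Cb (Adr β n) := by
      intro n m h
      obtain ⟨l, hl⟩ := Adr_append β h
      have hx : x m ∈ Cb (Adr β m) := hxCb (Adr β m)
      rw [hl] at hx
      exact h_desc l _ hx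
    have hcauchy : CauchySeq x := by
      apply cauchySeq_of_le_tendsto_0 (fun n => 2 * (1/2)^n) _ hhalf
      intro n m N hn hm
      have := hdistCb (Adr β N) (x n) (x m) (hxCb' N n hn) (hxCb' N m hm)
      rwa [Adr_length] at this
    obtain ⟨y, hy⟩ := cauchySeq_tendsto_of_complete hcauchy
    have hyCb : ∀ n, y ∈ Cb (Adr β n) := by
      intro n
      have hclosed : IsClosed (Cb (Adr β n)) := by
        rw [hCbdef]; exact Metric.isClosed_closedBall
      apply hclosed.mem_of_tendsto hy
      filter_upwards [Filter.eventually_ge_atTop n] with m hm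
      exact hxCb' n m hm
    have hyD : y ∈ Dset := by
      rw [hDsetdef]
      exact mem_iInter.2 (fun n => mem_iUnion₂.2 ⟨Adr β n, Adr_length β n, hyCb n⟩)
    refine ⟨y, hyD, funext (fun n => ?_)⟩
    have hex : ∃ σ : List ℕ, σ.length = n+1 ∧ y ∈ Cb σ :=
      ⟨Adr β (n+1), Adr_length β (n+1), hyCb (n+1)⟩
    rw [hbF y n hex]
    have hspec2 := hex.choose_spec
    have heq2 : hex.choose = Adr β (n+1) :=
      h_uniq y _ _ (by rw [hspec2.1, Adr_length]) hspec2.2 (hyCb (n+1))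
    rw [heq2]
    rfl
  -- local constancy of the branch map
  have h_loc : ∀ y ∈ Dset, ∀ m : ℕ, ∃ t > 0,
      ∀ y' ∈ Dset, dist y' y < t → ∀ j < m, bF y' j = bF y j := by
    intro y hy m
    have hball : ∀ j, dist y (sch (Adr (bF y) j)).2.1 < (sch (Adr (bF y) j)).2.2 := by
      intro j
      have h1 : y ∈ Cb (Adr (bF y) (j+1)) := h_addr y hy (j+1)
      exact h_cbb (bF y j) (Adr (bF y) j) h1
    obtain ⟨t, ht, hte⟩ := exists_pos_le_of_finite (Set.finite_Iio (m+1))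
      (fun j => (sch (Adr (bF y) j)).2.2 - dist y (sch (Adr (bF y) j)).2.1)
      (fun j _ => sub_pos.2 (hball j))
    refine ⟨t, ht, fun y' hy' hdist j hj => ?_⟩
    have hmem : Adr (bF y') (j+1) = Adr (bF y) (j+1) := by
      have hti := hte (j+1) (mem_Iio.2 (by omega))
      have htri := dist_triangle y' y (sch (Adr (bF y) (j+1))).2.1
      have h1 : dist y' (sch (Adr (bF y) (j+1))).2.1 < (sch (Adr (bF y) (j+1))).2.2 := by
        linarith
      have h3 : y' ∈ Cb (Adr (bF y) (j+1)) := by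
        rw [hCbdef]; exact Metric.mem_closedBall.2 h1.le
      exact h_uniq y' _ _ (by rw [Adr_length, Adr_length]) (h_addr y' hy' (j+1)) h3
    exact Adr_agree hmem j (Nat.lt_succ_self j)
  -- the Menger contradiction
  set CC : Set ↥(As []) := Subtype.val ⁻¹' Dset with hCCdef
  have hCCclosed : IsClosed CC := hDclosed.preimage continuous_subtype_val
  have hMC : MengerSpace ↥CC := mengerSpace_closed hM hCCclosed
  set G : ↥CC → (ℕ → ℕ) := fun cc => bF cc.val.val with hGdef
  have hGcont : Continuous G := by
    apply continuous_pi
    intro j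
    rw [continuous_iff_continuousAt]
    intro cc
    obtain ⟨t, ht, hte⟩ := h_loc cc.val.val cc.2 (j+1)
    have hnb : {cc' : ↥CC | dist cc'.val.val cc.val.val < t} ∈ nhds cc := by
      have hsub : Metric.ball cc t ⊆ {cc' : ↥CC | dist cc'.val.val cc.val.val < t} := by
        intro cc' h
        have h2 : dist cc' cc < t := h
        rwa [Subtype.dist_eq, Subtype.dist_eq] at h2
      exact Filter.mem_of_superset (Metric.ball_mem_nhds cc ht) hsub
    have heq : (fun cc' => G cc' j) =ᶠ[nhds cc] (fun _ => G cc j) := by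
      filter_upwards [hnb] with cc' h
      exact hte cc'.val.val cc'.2 h j (Nat.lt_succ_self j)
    exact ContinuousAt.congr continuousAt_const (Filter.EventuallyEq.symm heq)
  have hGsurj : Surjective G := by
    intro β
    obtain ⟨y, hyD, hbFy⟩ := hsurjD β
    exact ⟨⟨⟨y, hDsubA hyD⟩, hyD⟩, hbFy⟩
  exact baire_not_mengerSpace (mengerSpace_of_surjective hGcont hGsurj hMC)

end Dichotomy

section StoneCechEmb

lemma regular_aux {W' : Type*} [TopologicalSpace W'] [CompactSpace W'] [T2Space W']
    (w : W') (V : Set W') (hV : IsOpen V) (hwV : w ∈ V) :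
    ∃ Ow, IsOpen Ow ∧ w ∈ Ow ∧ closure Ow ⊆ V := by
  obtain ⟨t, htn, htc, hts⟩ := exists_mem_nhds_isClosed_subset (hV.mem_nhds hwV)
  exact ⟨interior t, isOpen_interior, mem_interior_iff_mem_nhds.2 htn,
    (closure_minimal interior_subset htc).trans hts⟩

variable {X' : Type u} [TopologicalSpace X'] [T35Space X']

lemma isInducing_stoneCechUnit_t35 : Topology.IsInducing (stoneCechUnit : X' → StoneCech X') := by
  rw [isInducing_iff_nhds]
  intro x
  apply le_antisymm
  · exact tendsto_iff_comap.1 (continuous_stoneCechUnit.tendsto x)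
  · refine Filter.le_def.2 (fun U hU => ?_)
    obtain ⟨U', hU'sub, hU'open, hxU'⟩ := mem_nhds_iff.1 hU
    obtain ⟨f, hf, hf0, hf1⟩ := CompletelyRegularSpace.completely_regular x U'ᶜ
      hU'open.isClosed_compl (by simpa using hxU')
    have hext := stoneCechExtend_extends hf
    refine Filter.mem_comap.2
      ⟨(stoneCechExtend hf) ⁻¹' {t : unitInterval | (t : ℝ) < 1/2}, ?_, ?_⟩
    · apply IsOpen.mem_nhds
      · exact (isOpen_Iio.preimage continuous_subtype_val).preimage (continuous_stoneCechExtend hf)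
      · show ((stoneCechExtend hf (stoneCechUnit x) : unitInterval) : ℝ) < 1/2
        have : stoneCechExtend hf (stoneCechUnit x) = f x := congrFun hext x
        rw [this, hf0]
        norm_num
    · intro z hz
      by_contra hzU
      have hzU' : z ∈ U'ᶜ := fun hz' => hzU (hU'sub hz')
      have h1 : f z = 1 := hf1 hzU'
      have h2 : stoneCechExtend hf (stoneCechUnit z) = f z := congrFun hext z
      have h3 : ((stoneCechExtend hf (stoneCechUnit z) : unitInterval) : ℝ) < 1/2 := hz
      rw [h2, h1] at h3
      norm_num at h3

lemma isEmbedding_stoneCechUnit_t35 :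
    Topology.IsEmbedding (stoneCechUnit : X' → StoneCech X') :=
  ⟨isInducing_stoneCechUnit_t35, injective_stoneCechUnit_of_t35Space⟩

end StoneCechEmb

section Helpers

lemma map_range_getD (α : ℕ → ℕ) (n m : ℕ) (h : m < n) :
    ((List.range n).map α).getD m 0 = α m := by
  rw [List.getD_eq_getElem?_getD]
  simp [List.getElem?_range h]

end Helpers

set_option maxHeartbeats 2000000

/-- Menger K-analytic spaces are Hurewicz. -/
theorem menger_kAnalytic_hurewicz
    (X : Type u) [TopologicalSpace X] [T35Space X]
    (hM : MengerSpace X) (hK : KAnalytic X) : HurewiczSpace X := by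
  intro Z tZ h35Z hCCZ e he
  letI := tZ; haveI := h35Z
  classical
  by_cases hXne : Nonempty X
  swap
  · refine ⟨∅, ⟨fun _ => ∅, fun _ => isCompact_empty, by simp⟩, ?_⟩
    rintro z ⟨x, rfl⟩
    exact absurd ⟨x⟩ hXne
  obtain ⟨Y, tY, t35Y, hLin, hCCY, g, hgc, hgs⟩ := hK
  letI := tY; haveI := t35Y; haveI := hLin
  haveI : Nonempty Y := ⟨(hgs (Classical.arbitrary X)).choose⟩
  -- Stone–Čech of Z
  have huZ : Topology.IsEmbedding (stoneCechUnit : Z → StoneCech Z) :=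
    isEmbedding_stoneCechUnit_t35
  obtain ⟨H, hHopen, hHeq⟩ := isGδ_iff_eq_iInter_nat.1 hCCZ
  set eh : X → StoneCech Z := fun x => stoneCechUnit (e x) with hehdef
  have heh : Continuous eh := continuous_stoneCechUnit.comp he.continuous
  have hehH : ∀ (x : X) (n : ℕ), eh x ∈ H n := fun x n => by
    have h1 : eh x ∈ range (stoneCechUnit : Z → StoneCech Z) := mem_range_self (e x)
    rw [hHeq] at h1
    exact mem_iInter.1 h1 n
  -- countable shrinking covers on the Z-side
  have hcover : ∀ n : ℕ, ∃ (O' O : ℕ → Set (StoneCech Z)),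
      (∀ j, IsOpen (O' j)) ∧ (∀ j, IsOpen (O j)) ∧ (∀ j, closure (O' j) ⊆ O j) ∧
      (∀ j, closure (O j) ⊆ H n) ∧ (∀ x : X, ∃ j, eh x ∈ O' j) := by
    intro n
    set 𝒰 : Set (Set X) := {u | ∃ O' O : Set (StoneCech Z), IsOpen O' ∧ IsOpen O ∧
      closure O' ⊆ O ∧ closure O ⊆ H n ∧ u = eh ⁻¹' O'} with h𝒰
    have h𝒰o : ∀ u ∈ 𝒰, IsOpen u := by
      rintro u ⟨O', O, h1, h2, h3, h4, rfl⟩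
      exact h1.preimage heh
    have h𝒰c : ⋃₀ 𝒰 = univ := by
      apply eq_univ_of_forall
      intro x
      obtain ⟨O2, hO2o, hO2m, hO2c⟩ := regular_aux (eh x) (H n) (hHopen n) (hehH x n)
      obtain ⟨O1, hO1o, hO1m, hO1c⟩ := regular_aux (eh x) O2 hO2o hO2m
      exact ⟨eh ⁻¹' O1, ⟨O1, O2, hO1o, hO2o, hO1c, hO2c, rfl⟩, hO1m⟩
    obtain ⟨𝒞, h𝒞sub, h𝒞c, h𝒞cov⟩ := mengerSpace_countable_subcover hM 𝒰 h𝒰o h𝒰c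
    have h𝒞ne : 𝒞.Nonempty := by
      have hx : (Classical.arbitrary X) ∈ ⋃₀ 𝒞 := by rw [h𝒞cov]; trivial
      obtain ⟨u, hu, -⟩ := hx
      exact ⟨u, hu⟩
    obtain ⟨uf, hufeq⟩ := h𝒞c.exists_eq_range h𝒞ne
    have hufmem : ∀ j : ℕ, ∃ O' O : Set (StoneCech Z), IsOpen O' ∧ IsOpen O ∧
        closure O' ⊆ O ∧ closure O ⊆ H n ∧ uf j = eh ⁻¹' O' := by
      intro j
      have : uf j ∈ 𝒰 := h𝒞sub (hufeq ▸ mem_range_self j)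
      exact this
    choose O' O hO'o hOo hO'O hOH hueq using hufmem
    refine ⟨O', O, hO'o, hOo, hO'O, hOH, ?_⟩
    intro x
    have hx : x ∈ ⋃₀ 𝒞 := by rw [h𝒞cov]; trivial
    obtain ⟨u, hu, hxu⟩ := hx
    rw [hufeq] at hu
    obtain ⟨j, rfl⟩ := hu
    rw [hueq j] at hxu
    exact ⟨j, hxu⟩
  choose O' O hO'o hOo hO'O hOH hO'cov using hcover
  -- Urysohn functions
  have hUry : ∀ n j : ℕ, ∃ f : C(StoneCech Z, ℝ), EqOn f 0 ((O n j)ᶜ) ∧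
      EqOn f 1 (closure (O' n j)) ∧ ∀ w, f w ∈ Icc (0:ℝ) 1 := by
    intro n j
    apply exists_continuous_zero_one_of_isClosed (isClosed_compl_iff.2 (hOo n j)) isClosed_closure
    rw [Set.disjoint_left]
    intro w hw hw2
    exact hw (hO'O n j hw2)
  choose fu hfu0 hfu1 hfuI using hUry
  -- the weight functions
  set sg : X → ℕ → ℝ := fun x n => ∑' j, (1/2:ℝ)^j * fu n j (eh x) with hsgdef
  have htermnn : ∀ n x j, 0 ≤ (1/2:ℝ)^j * fu n j (eh x) := by
    intro n x j
    have := (hfuI n j (eh x)).1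
    positivity
  have htermle : ∀ n x j, (1/2:ℝ)^j * fu n j (eh x) ≤ (1/2:ℝ)^j := by
    intro n x j
    have h1 := (hfuI n j (eh x)).2
    have h2 : (0:ℝ) ≤ (1/2:ℝ)^j := by positivity
    calc (1/2:ℝ)^j * fu n j (eh x) ≤ (1/2:ℝ)^j * 1 := by
          exact mul_le_mul_of_nonneg_left h1 h2
      _ = (1/2:ℝ)^j := mul_one _
  have hgeom : Summable (fun j : ℕ => (1/2:ℝ)^j) := summable_geometric_two
  have hsummable : ∀ n x, Summable (fun j => (1/2:ℝ)^j * fu n j (eh x)) := by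
    intro n x
    exact Summable.of_nonneg_of_le (htermnn n x) (htermle n x) hgeom
  have hsgpos : ∀ n x, 0 < sg x n := by
    intro n x
    obtain ⟨j, hj⟩ := hO'cov n x
    have hval : fu n j (eh x) = 1 := hfu1 n j (subset_closure hj)
    apply Summable.tsum_pos (hsummable n x) (htermnn n x) j
    rw [hval]
    positivity
  have hsgcont : ∀ n, Continuous (fun x => sg x n) := by
    intro n
    apply continuous_tsum (u := fun j => (1/2:ℝ)^j)
    · exact fun j => (continuous_const.mul ((fu n j).continuous.comp heh))
    · exact hgeom
    · intro j x
      rw [Real.norm_eq_abs, abs_of_nonneg (htermnn n x j)]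
      exact htermle n x j
  set τf : X → ℕ → ℝ := fun x n => (sg x n)⁻¹ with hτdef
  have hτcont : Continuous τf := by
    apply continuous_pi
    intro n
    exact (hsgcont n).inv₀ (fun x => ne_of_gt (hsgpos n x))
  -- tail estimate
  have hsgtail : ∀ n k x, (∀ j ≤ k, eh x ∉ O n j) → sg x n ≤ (1/2:ℝ)^k := by
    intro n k x hx
    have hzero : ∀ j ≤ k, (1/2:ℝ)^j * fu n j (eh x) = 0 := by
      intro j hj
      rw [hfu0 n j (hx j hj)]
      simp
    have hsplit := Summable.sum_add_tsum_nat_add (f := fun j => (1/2:ℝ)^j * fu n j (eh x)) (k+1)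
      (hsummable n x)
    have hfz : ∑ i ∈ Finset.range (k+1), (1/2:ℝ)^i * fu n i (eh x) = 0 := by
      apply Finset.sum_eq_zero
      intro i hi
      exact hzero i (Nat.lt_succ_iff.1 (Finset.mem_range.1 hi))
    have hpowle : ∀ i : ℕ, ((1/2:ℝ))^(i+(k+1)) ≤ (1/2:ℝ)^i := fun i =>
      pow_le_pow_of_le_one (by norm_num) (by norm_num) (Nat.le_add_right i (k+1))
    have hsum2 : Summable (fun i => (1/2:ℝ)^(i+(k+1)) * fu n (i+(k+1)) (eh x)) :=
      Summable.of_nonneg_of_le (fun i => htermnn n x (i+(k+1)))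
        (fun i => le_trans (htermle n x (i+(k+1))) (hpowle i)) hgeom
    have hsum3 : Summable (fun i : ℕ => (1/2:ℝ)^(i+(k+1))) :=
      Summable.of_nonneg_of_le (fun i => by positivity) hpowle hgeom
    have hle2 : ∑' i, (1/2:ℝ)^(i+(k+1)) * fu n (i+(k+1)) (eh x) ≤ ∑' i, (1/2:ℝ)^(i+(k+1)) := by
      apply Summable.tsum_le_tsum _ hsum2 hsum3
      intro i
      exact htermle n x (i+(k+1))
    have hcomp : ∑' i : ℕ, (1/2:ℝ)^(i+(k+1)) = (1/2:ℝ)^k := by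
      have h1 : (fun i : ℕ => (1/2:ℝ)^(i+(k+1))) = fun i : ℕ => (1/2:ℝ)^i * (1/2:ℝ)^(k+1) := by
        funext i; rw [pow_add]
      rw [h1, tsum_mul_right, tsum_geometric_two]
      rw [pow_succ]
      ring
    have : sg x n = ∑' i, (1/2:ℝ)^(i+(k+1)) * fu n (i+(k+1)) (eh x) := by
      rw [hsgdef]
      simp only []
      rw [← hsplit, hfz, zero_add]
    rw [this]
    rw [hcomp] at hle2
    exact hle2
  -- Y-side
  have huY : Topology.IsEmbedding (stoneCechUnit : Y → StoneCech Y) :=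
    isEmbedding_stoneCechUnit_t35
  obtain ⟨GY, hGYopen, hGYeq⟩ := isGδ_iff_eq_iInter_nat.1 hCCY
  have hYLin : IsLindelof (range (stoneCechUnit : Y → StoneCech Y)) :=
    isLindelof_range continuous_stoneCechUnit
  have hYcov : ∀ n : ℕ, ∃ UU : ℕ → Set (StoneCech Y), (∀ k, IsOpen (UU k)) ∧
      (∀ k, closure (UU k) ⊆ GY n) ∧
      range (stoneCechUnit : Y → StoneCech Y) ⊆ ⋃ k, UU k := by
    intro n
    have hmem : ∀ w : ↥(range (stoneCechUnit : Y → StoneCech Y)),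
        ∃ Ow, IsOpen Ow ∧ (w : StoneCech Y) ∈ Ow ∧ closure Ow ⊆ GY n := by
      intro w
      apply regular_aux _ _ (hGYopen n)
      exact mem_iInter.1 (hGYeq.subset w.2) n
    choose Ow hOwo hOwm hOwc using hmem
    obtain ⟨r, hrc, hrcov⟩ := hYLin.elim_countable_subcover Ow hOwo
      (fun w hw => mem_iUnion.2 ⟨⟨w, hw⟩, hOwm _⟩)
    have hrne : r.Nonempty := by
      have h0 : stoneCechUnit (Classical.arbitrary Y) ∈
          range (stoneCechUnit : Y → StoneCech Y) := mem_range_self _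
      obtain ⟨i, hi, -⟩ := mem_iUnion₂.1 (hrcov h0)
      exact ⟨i, hi⟩
    obtain ⟨rf, hrfeq⟩ := hrc.exists_eq_range hrne
    refine ⟨fun k => Ow (rf k), fun k => hOwo _, fun k => hOwc _, ?_⟩
    intro w hw
    obtain ⟨i, hi, hwi⟩ := mem_iUnion₂.1 (hrcov hw)
    rw [hrfeq] at hi
    obtain ⟨k, rfl⟩ := hi
    exact mem_iUnion.2 ⟨k, hwi⟩
  choose UU hUUo hUUc hUUcov using hYcov
  set ρτ : Y → (ℕ → ℝ) := fun y => τf (g y) with hρτdef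
  have hρτc : Continuous ρτ := hτcont.comp hgc
  set As : List ℕ → Set (ℕ → ℝ) := fun s =>
    ρτ '' ((stoneCechUnit : Y → StoneCech Y) ⁻¹'
      (⋂ (m : ℕ) (_ : m < s.length), closure (UU m (s.getD m 0)))) with hAsdef
  have hAsnil : As [] = range ρτ := by
    rw [hAsdef]
    simp
  have hdec : ∀ s, As s = ⋃ k, As (s ++ [k]) := by
    intro s
    apply Set.eq_of_subset_of_subset
    · rintro v ⟨y, hy, rfl⟩
      have hyr : stoneCechUnit y ∈ range (stoneCechUnit : Y → StoneCech Y) :=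
        mem_range_self y
      obtain ⟨k, hk⟩ := mem_iUnion.1 (hUUcov s.length hyr)
      refine mem_iUnion.2 ⟨k, ⟨y, ?_, rfl⟩⟩
      refine mem_iInter.2 (fun m => mem_iInter.2 (fun hm => ?_))
      rw [List.length_append, List.length_singleton] at hm
      rcases Nat.lt_succ_iff_lt_or_eq.1 hm with hm' | hm'
      · rw [List.getD_append _ _ _ _ hm']
        exact mem_iInter.1 (mem_iInter.1 hy m) hm'
      · subst hm'
        have hgd : (s ++ [k]).getD s.length 0 = k := by
          rw [List.getD_append_right _ _ _ _ le_rfl]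
          simp
        rw [hgd]
        exact subset_closure hk
    · refine iUnion_subset (fun k => ?_)
      rintro v ⟨y, hy, rfl⟩
      refine ⟨y, ?_, rfl⟩
      refine mem_iInter.2 (fun m => mem_iInter.2 (fun hm => ?_))
      have hm2 : m < (s ++ [k]).length := by
        rw [List.length_append, List.length_singleton]; omega
      have hmem := mem_iInter.1 (mem_iInter.1 hy m) hm2
      rwa [List.getD_append _ _ _ _ hm] at hmem
  have hAP : ∀ (α : ℕ → ℕ) (x : ℕ → (ℕ → ℝ)) (yy : ℕ → ℝ),
      (∀ n, x n ∈ As ((List.range n).map α)) →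
      Filter.Tendsto x Filter.atTop (nhds yy) → yy ∈ As [] := by
    intro α x yy hx hlim
    have hzex : ∀ n, ∃ z : Y, (stoneCechUnit z ∈
        ⋂ (m : ℕ) (_ : m < n), closure (UU m (α m))) ∧ ρτ z = x n := by
      intro n
      obtain ⟨z, hz1, hz2⟩ := hx n
      refine ⟨z, ?_, hz2⟩
      refine mem_iInter.2 (fun m => mem_iInter.2 (fun hm => ?_))
      have hlen : m < ((List.range n).map α).length := by simpa using hm
      have hmem := mem_iInter.1 (mem_iInter.1 hz1 m) hlen
      rwa [map_range_getD α n m hm] at hmem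
    choose z hz1 hz2 using hzex
    set 𝒱 : Ultrafilter ℕ := Ultrafilter.of Filter.atTop with h𝒱
    have h𝒱le : (𝒱 : Filter ℕ) ≤ Filter.atTop := Ultrafilter.of_le _
    obtain ⟨w, -, hw⟩ := isCompact_univ.ultrafilter_le_nhds
      (𝒱.map (fun n => stoneCechUnit (z n))) (by simp)
    have hwtendsto : Filter.Tendsto (fun n => stoneCechUnit (z n)) 𝒱 (nhds w) := hw
    have hwcl : ∀ m, w ∈ closure (UU m (α m)) := by
      intro m
      apply isClosed_closure.mem_of_tendsto hwtendsto
      have hev : {n : ℕ | stoneCechUnit (z n) ∈ closure (UU m (α m))} ∈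
          (Filter.atTop : Filter ℕ) := by
        apply Filter.mem_of_superset (Filter.eventually_ge_atTop (m+1))
        intro n hn
        have hn' : m + 1 ≤ n := hn
        exact mem_iInter.1 (mem_iInter.1 (hz1 n) m) (by omega)
      exact h𝒱le hev
    have hwr : w ∈ range (stoneCechUnit : Y → StoneCech Y) := by
      rw [hGYeq]
      exact mem_iInter.2 (fun m => hUUc m (α m) (hwcl m))
    obtain ⟨yw, rfl⟩ := hwr
    have hztendsto : Filter.Tendsto z 𝒱 (nhds yw) :=
      (huY.tendsto_nhds_iff).2 hwtendsto
    have hx𝒱 : Filter.Tendsto x 𝒱 (nhds yy) := hlim.mono_left h𝒱le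
    have hx𝒱' : Filter.Tendsto x 𝒱 (nhds (ρτ yw)) := by
      have hcomp := (hρτc.tendsto yw).comp hztendsto
      have hxe : ρτ ∘ z = x := funext hz2
      rwa [hxe] at hcomp
    have heq : yy = ρτ yw := tendsto_nhds_unique hx𝒱 hx𝒱'
    rw [hAsnil, heq]
    exact mem_range_self yw
  have hτmem : ∀ x : X, τf x ∈ As [] := by
    intro x
    obtain ⟨y, hy⟩ := hgs x
    rw [hAsnil]
    refine ⟨y, ?_⟩
    rw [hρτdef]
    simp only []
    rw [hy]
  have hMA : MengerSpace ↥(As []) := by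
    apply mengerSpace_of_surjective
      (f := fun x : X => (⟨τf x, hτmem x⟩ : ↥(As []))) (hτcont.subtype_mk _) ?_ hM
    rintro ⟨v, hv⟩
    rw [hAsnil] at hv
    obtain ⟨y, rfl⟩ := hv
    exact ⟨g y, rfl⟩
  letI := upgradeIsCompletelyMetrizable (ℕ → ℝ)
  obtain ⟨S, hSsc, hSsub⟩ := dichotomy As hdec hAP hMA
  obtain ⟨K, hKcpt, hKeq⟩ := hSsc
  have hclaim : ∀ i n : ℕ, ∃ k : ℕ, ∀ x : X, τf x ∈ K i → ∃ j ≤ k, eh x ∈ O n j := by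
    intro i n
    have hbdd : BddAbove ((fun v : ℕ → ℝ => v n) '' K i) :=
      ((hKcpt i).image (continuous_apply n)).bddAbove
    obtain ⟨M, hMub⟩ := hbdd
    obtain ⟨k, hk⟩ := pow_unbounded_of_one_lt M (by norm_num : (1:ℝ) < 2)
    refine ⟨k, fun x hx => ?_⟩
    by_contra hnone
    push_neg at hnone
    have htail := hsgtail n k x (fun j hj => hnone j hj)
    have h1 : ((1/2:ℝ)^k)⁻¹ ≤ (sg x n)⁻¹ := inv_anti₀ (hsgpos n x) htail
    have h2 : ((1/2:ℝ)^k)⁻¹ = 2^k := by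
      rw [one_div, inv_pow, inv_inv]
    have h3 : τf x n ≤ M := hMub (mem_image_of_mem _ hx)
    have h4 : (sg x n)⁻¹ = τf x n := rfl
    rw [h2, h4] at h1
    linarith
  choose kb hkb using hclaim
  set L : ℕ → Set (StoneCech Z) := fun i => closure (eh '' {x : X | τf x ∈ K i}) with hLdef
  have hLcpt : ∀ i, IsCompact (L i) := fun i => isClosed_closure.isCompact
  have hLsub : ∀ i, L i ⊆ range (stoneCechUnit : Z → StoneCech Z) := by
    intro i
    rw [hHeq]
    refine subset_iInter (fun n => ?_)
    have h1 : eh '' {x : X | τf x ∈ K i} ⊆ ⋃ j ∈ Finset.range (kb i n + 1), O n j := by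
      rintro w ⟨x, hx, rfl⟩
      obtain ⟨j, hj, hj2⟩ := hkb i n x hx
      exact mem_biUnion (Finset.mem_range.2 (by omega)) hj2
    calc L i ⊆ closure (⋃ j ∈ Finset.range (kb i n + 1), O n j) := closure_mono h1
      _ = ⋃ j ∈ Finset.range (kb i n + 1), closure (O n j) :=
          Finset.closure_biUnion _ _
      _ ⊆ H n := iUnion₂_subset (fun j _ => hOH n j)
  refine ⟨⋃ i, (stoneCechUnit : Z → StoneCech Z) ⁻¹' (L i),
    ⟨fun i => (stoneCechUnit : Z → StoneCech Z) ⁻¹' (L i), fun i => ?_, rfl⟩, ?_⟩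
  · rw [huZ.isCompact_iff]
    have himg : (stoneCechUnit : Z → StoneCech Z) ''
        ((stoneCechUnit : Z → StoneCech Z) ⁻¹' (L i)) = L i := by
      rw [Set.image_preimage_eq_inter_range, inter_eq_self_of_subset_left (hLsub i)]
    rw [himg]
    exact hLcpt i
  · rintro z ⟨x, rfl⟩
    have h1 : τf x ∈ S := hSsub (hτmem x)
    rw [← hKeq] at h1
    obtain ⟨i, hi⟩ := mem_iUnion.1 h1
    refine mem_iUnion.2 ⟨i, ?_⟩
    show stoneCechUnit (e x) ∈ L i
    exact subset_closure ⟨x, hi, rfl⟩
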